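/- Let A₁,…,Aₘ be Hermitian d×d matrices satisfying AᵢAⱼ + AⱼAᵢ = 2δᵢⱼ·I for all i,j (i.e., they square to the identity and pairwise anticommute). Then for any density matrix ρ on ℂ^d, ∑ᵢ (Tr(Aᵢρ))² ≤ 1. -/

import Mathlib

open ComplexOrder
open Matrix

lemma psd_trace_nonneg {d : ℕ} {M : Matrix (Fin d) (Fin d) ℂ}
    (hM : M.PosSemidef) : 0 ≤ M.trace := by
  rw [Matrix.trace]
  apply Finset.sum_nonneg
  intro i _
  exact hM.diag_nonneg

lemma psd_trace_mul_nonneg {d : ℕ} {P Q : Matrix (Fin d) (Fin d) ℂ}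
    (hP : P.PosSemidef) (hQ : Q.PosSemidef) : 0 ≤ (P * Q).trace := by
  open scoped MatrixOrder in
  have hS : (CFC.sqrt P).PosSemidef := (CFC.sqrt_nonneg P).posSemidef
  open scoped MatrixOrder in
  have h1 : P = CFC.sqrt P * CFC.sqrt P := (CFC.sqrt_mul_sqrt_self P hP.nonneg).symm
  rw [h1, ← Matrix.trace_mul_cycle]
  have h2 := hQ.mul_mul_conjTranspose_same (CFC.sqrt P)
  rw [hS.1] at h2
  exact psd_trace_nonneg h2

/-- **Anticommutativity bound, special case.** If `A₁,…,Aₘ` are Hermitian `d × d` matrices with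
`AᵢAⱼ + AⱼAᵢ = 2δᵢⱼ 1` (they square to the identity and pairwise anticommute), then for any
density matrix `ρ` on `ℂ^d`, `∑ᵢ (Tr(Aᵢ ρ))² ≤ 1`. -/
theorem stmt1 {d m : ℕ} (A : Fin m → Matrix (Fin d) (Fin d) ℂ)
    (hA : ∀ i, (A i).IsHermitian)
    (hAanti : ∀ i j, A i * A j + A j * A i =
      if i = j then (2 : ℂ) • (1 : Matrix (Fin d) (Fin d) ℂ) else 0)
    (ρ : Matrix (Fin d) (Fin d) ℂ) (hρ : ρ.PosSemidef) (hρ1 : ρ.trace = 1) :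
    ∑ i, (((A i * ρ).trace).re) ^ 2 ≤ 1 := by
  set t : Fin m → ℝ := fun i => ((A i * ρ).trace).re with ht
  set s : ℝ := ∑ i, t i ^ 2 with hs
  have hs_nonneg : 0 ≤ s := Finset.sum_nonneg fun i _ => sq_nonneg _
  rcases eq_or_lt_of_le hs_nonneg with hs0 | hs0
  · rw [← hs0]; norm_num
  set B : Matrix (Fin d) (Fin d) ℂ := ∑ i, (t i : ℂ) • A i with hB
  have expand : B * B = ∑ i, ∑ j, ((t i : ℂ) * (t j : ℂ)) • (A i * A j) := by
    rw [hB, Finset.sum_mul_sum]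
    simp_rw [Matrix.smul_mul, Matrix.mul_smul, smul_smul]
  have expand' : B * B = ∑ i, ∑ j, ((t i : ℂ) * (t j : ℂ)) • (A j * A i) := by
    rw [expand, Finset.sum_comm]
    refine Finset.sum_congr rfl fun i _ => Finset.sum_congr rfl fun j _ => ?_
    rw [mul_comm]
  have hBB : B * B = (s : ℂ) • 1 := by
    have key : (2 : ℂ) • (B * B)
        = ∑ i, ∑ j, ((t i : ℂ) * (t j : ℂ)) • (A i * A j + A j * A i) := by
      simp_rw [smul_add, Finset.sum_add_distrib, ← expand, ← expand', two_smul]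
    simp only [hAanti, smul_ite, smul_zero, Finset.sum_ite_eq, Finset.mem_univ,
      if_true] at key
    have key2 : (2 : ℂ) • (B * B) = (2 : ℂ) • ((s : ℂ) • 1) := by
      rw [key, smul_smul]
      simp_rw [smul_smul, ← Finset.sum_smul]
      congr 1
      rw [hs]
      push_cast
      rw [Finset.mul_sum]
      exact Finset.sum_congr rfl fun i _ => by ring
    exact smul_right_injective _ two_ne_zero key2
  have hBH : Bᴴ = B := by
    rw [hB, Matrix.conjTranspose_sum]
    refine Finset.sum_congr rfl fun i _ => ?_
    rw [Matrix.conjTranspose_smul, (hA i).eq, Complex.star_def, Complex.conj_ofReal]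
  have htrB : ((B * ρ).trace).re = s := by
    rw [hB, Finset.sum_mul, Matrix.trace_sum]
    simp_rw [Matrix.smul_mul, Matrix.trace_smul, smul_eq_mul]
    rw [Complex.re_sum, hs]
    exact Finset.sum_congr rfl fun i _ => by
      rw [Complex.re_ofReal_mul]; simp [ht, sq]
  set c := Real.sqrt s with hc
  have hcpos : 0 < c := Real.sqrt_pos.mpr hs0
  have hc2 : c ^ 2 = s := Real.sq_sqrt hs_nonneg
  have hc2' : (s : ℂ) = (c : ℂ) * (c : ℂ) := by
    rw [← hc2]; push_cast; ring
  set M : Matrix (Fin d) (Fin d) ℂ := (c : ℂ) • 1 - B with hM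
  have hMH : Mᴴ = M := by
    rw [hM, Matrix.conjTranspose_sub, Matrix.conjTranspose_smul, hBH,
      Matrix.conjTranspose_one, Complex.star_def, Complex.conj_ofReal]
  have hMM : M * M = ((2 * c : ℝ) : ℂ) • M := by
    have e1 : M * M = ((c : ℂ) * (c : ℂ)) • (1 : Matrix (Fin d) (Fin d) ℂ)
        - (c : ℂ) • B - (c : ℂ) • B + B * B := by
      rw [hM]
      simp only [sub_mul, mul_sub, smul_mul_assoc, mul_smul_comm,
        one_mul, mul_one, smul_smul, smul_sub]
      module
    rw [e1, hBB, hc2', hM]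
    push_cast
    module
  have hpsd := Matrix.posSemidef_conjTranspose_mul_self M
  have h0 : 0 ≤ ((Mᴴ * M * ρ).trace) := psd_trace_mul_nonneg hpsd hρ
  have htr2 : (Mᴴ * M * ρ).trace = ((2 * c : ℝ) : ℂ) * ((M * ρ).trace) := by
    rw [hMH, hMM, Matrix.smul_mul, Matrix.trace_smul, smul_eq_mul]
  have htrM : ((M * ρ).trace).re = c - s := by
    rw [hM, Matrix.sub_mul, Matrix.trace_sub, Matrix.smul_mul, Matrix.one_mul,
      Matrix.trace_smul, hρ1]
    simp [htrB]
  have h0' : 0 ≤ (2 * c) * (c - s) := by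
    rw [Complex.le_def] at h0
    have h0re := h0.1
    rw [htr2, Complex.re_ofReal_mul, htrM] at h0re
    simpa using h0re
  nlinarith [h0', hc2, hcpos]
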